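/- Let V be a finite set, k a positive integer with k ≤ |V|, and let p_l, p, p_u : V → ℝ satisfy p_l(v) ≤ p(v) ≤ p_u(v) for every v ∈ V. Let T_u denote the k-th largest value of p_u over V. If a node u ∈ V satisfies p_l(u) ≥ T_u, then u must be in the top-k by true value; precisely, the number of nodes w ∈ V with p(w) > p(u) is strictly less than k. -/

import Mathlib

/-- The `k`-th largest value attained by `f` on the finite type `V`
(the `k`-th entry, 1-indexed, of the list of values of `f` sorted in
non-increasing order). -/
noncomputable def kthLargest {V : Type*} [Fintype V] (f : V → ℝ) (k : ℕ) : ℝ :=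
  ((Finset.univ.val.map f).sort (· ≥ ·)).getD (k - 1) 0

/-- First pruning rule of Lemma 1 of the paper: if `p_l ≤ p ≤ p_u` pointwise
and a node `u` satisfies `p_l(u) ≥ T_u`, where `T_u` is the `k`-th largest
value of `p_u`, then `u` must be in the top-`k` by true value: fewer than `k`
nodes have strictly larger true value. -/
theorem stmt3
    {V : Type*} [Fintype V] [DecidableEq V]
    (k : ℕ) (hk : 1 ≤ k) (hkcard : k ≤ Fintype.card V)
    (pl p pu : V → ℝ)
    (hl : ∀ v, pl v ≤ p v) (hu : ∀ v, p v ≤ pu v)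
    (u : V) (hcond : kthLargest pu k ≤ pl u) :
    (Finset.univ.filter (fun w => p u < p w)).card < k := by
  set l := ((Finset.univ.val.map pu).sort (· ≥ ·)) with hl_def
  have hlen : l.length = Fintype.card V := by
    rw [hl_def, Multiset.length_sort, Multiset.card_map]
    rfl
  have hsorted : l.Pairwise (· ≥ ·) := Multiset.pairwise_sort _ _
  have hk1 : k - 1 < l.length := by omega
  set T := kthLargest pu k with hT_def
  have hTval : T = l.get ⟨k-1, hk1⟩ := by
    rw [hT_def, kthLargest, ← hl_def, List.getD_eq_getElem _ _ hk1]
    simp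
  have hsub : (Finset.univ.filter (fun w => p u < p w)) ⊆
      Finset.univ.filter (fun w => T < pu w) := by
    intro w hw
    simp only [Finset.mem_filter, Finset.mem_univ, true_and] at hw ⊢
    calc T ≤ pl u := hcond
      _ ≤ p u := hl u
      _ < p w := hw
      _ ≤ pu w := hu w
  refine lt_of_le_of_lt (Finset.card_le_card hsub) ?_
  have hcount : (Finset.univ.filter (fun w => T < pu w)).card
      = l.countP (fun x => decide (T < x)) := by
    rw [hl_def, ← Multiset.coe_countP, Multiset.sort_eq, Multiset.countP_map]
    rfl
  rw [hcount]
  by_contra hcontra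
  push_neg at hcontra
  set f := l.filter (fun x => decide (T < x)) with hf_def
  have hflen : k ≤ f.length := by rw [hf_def, ← List.countP_eq_length_filter]; exact hcontra
  have hsubl : List.Sublist f l := List.filter_sublist
  obtain ⟨e, he⟩ := List.sublist_iff_exists_fin_orderEmbedding_get_eq.mp hsubl
  have hk1f : k - 1 < f.length := by omega
  set i : Fin f.length := ⟨k-1, hk1f⟩
  have hx : T < f.get i := by
    have hm : f.get i ∈ List.filter (fun x => decide (T < x)) l := f.get_mem i
    simpa using (List.mem_filter.mp hm).2
  have key : ∀ (j : ℕ) (hj : j < f.length), j ≤ (e ⟨j, hj⟩ : ℕ) := by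
    intro j
    induction j with
    | zero => intro hj; exact Nat.zero_le _
    | succ n ih =>
      intro hj
      have hn : n < f.length := by omega
      have hlt : e ⟨n, hn⟩ < e ⟨n+1, hj⟩ := e.strictMono (by simp [Fin.lt_def])
      have h1 := ih hn
      have h2 := Fin.lt_def.mp hlt
      omega
  have hge : (k - 1 : ℕ) ≤ (e i : ℕ) := key (k-1) hk1f
  have hle : l.get (e i) ≤ l.get ⟨k-1, hk1⟩ := by
    rcases eq_or_lt_of_le hge with h | h
    · have heq : (⟨k-1, hk1⟩ : Fin l.length) = e i := Fin.ext h
      rw [← heq]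
    · exact hsorted.rel_get_of_lt (Fin.lt_def.mpr h)
  rw [he i, hTval] at hx
  exact absurd hle (not_le.mpr hx)
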